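/- (Drinfeld) Let k be a commutative ring and let (A, ρ) be a quasitriangular Hopf algebra over k with antipode s. Write ρ = Σ e ⊗ e′ and set u = Σ s(e′)·e ∈ A (that is, u is the image of ρ under the map A ⊗ A → A sending x ⊗ y to s(y)·x). Then u is invertible in A and s²(x) = u x u⁻¹ for all x ∈ A. -/

import Mathlib

open TensorProduct

noncomputable section

section

variable (k A : Type*) [CommRing k] [Ring A] [HopfAlgebra k A]

/-- `ρ₁₂ = Σ e ⊗ e' ⊗ 1` in `A ⊗ (A ⊗ A)`. -/
def rho12 (ρ : A ⊗[k] A) : A ⊗[k] (A ⊗[k] A) :=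
  TensorProduct.map LinearMap.id ((TensorProduct.mk k A A).flip 1) ρ

/-- `ρ₁₃ = Σ e ⊗ 1 ⊗ e'` in `A ⊗ (A ⊗ A)`. -/
def rho13 (ρ : A ⊗[k] A) : A ⊗[k] (A ⊗[k] A) :=
  TensorProduct.map LinearMap.id (TensorProduct.mk k A A 1) ρ

/-- `ρ₂₃ = 1 ⊗ Σ e ⊗ e'` in `A ⊗ (A ⊗ A)`. -/
def rho23 (ρ : A ⊗[k] A) : A ⊗[k] (A ⊗[k] A) :=
  (1 : A) ⊗ₜ[k] ρ

/-- `(A, ρ)` is quasitriangular: `ρ` is invertible in the algebra `A ⊗ A`,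
`ρ ⬝ Δ(x) = Δ'(x) ⬝ ρ` for all `x`, `(1 ⊗ Δ)(ρ) = ρ₁₃ρ₁₂` and `(Δ ⊗ 1)(ρ) = ρ₁₃ρ₂₃`. -/
def IsQuasitriangular (ρ : A ⊗[k] A) : Prop :=
  IsUnit ρ ∧
  (∀ x : A, ρ * Coalgebra.comul (R := k) x =
      (TensorProduct.comm k A A) (Coalgebra.comul (R := k) x) * ρ) ∧
  TensorProduct.map LinearMap.id (Coalgebra.comul (R := k)) ρ =
      rho13 k A ρ * rho12 k A ρ ∧
  TensorProduct.assoc k A A A (TensorProduct.map (Coalgebra.comul (R := k)) LinearMap.id ρ) =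
      rho13 k A ρ * rho23 k A ρ

/-- The Drinfeld element `u = Σ s(e') e`, the image of `ρ = Σ e ⊗ e'` under the map
`A ⊗ A → A`, `x ⊗ y ↦ s(y) x`. -/
def uElt (ρ : A ⊗[k] A) : A :=
  LinearMap.mul' k A
    (TensorProduct.map (HopfAlgebra.antipode (R := k)) LinearMap.id
      ((TensorProduct.comm k A A) ρ))

end

namespace DrinfeldAux

open Coalgebra HopfAlgebra

variable {k A : Type*} [CommRing k] [Ring A] [HopfAlgebra k A]


lemma mul_algebraMap_right (c : k) (x : A) : x * algebraMap k A c = c • x := by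
  rw [← Algebra.commutes, ← Algebra.smul_def]

lemma mul_algebraMap_mul (c : k) (x y : A) : x * algebraMap k A c * y = c • (x * y) := by
  rw [← Algebra.commutes, ← Algebra.smul_def, smul_mul_assoc]

lemma sum_counit_smul_left' {x : A} {ι : Type*} (r : Coalgebra.Repr k x ι) :
    ∑ i ∈ r.index, Coalgebra.counit (R := k) (r.right i) • r.left i = x := by
  have h2 := congrArg (TensorProduct.rid k A) (Coalgebra.sum_tmul_counit_eq (R := k) r)
  rw [map_sum] at h2
  simp only [TensorProduct.rid_tmul, one_smul] at h2
  exact h2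

lemma sum_counit_smul_right' {x : A} {ι : Type*} (r : Coalgebra.Repr k x ι) :
    ∑ i ∈ r.index, Coalgebra.counit (R := k) (r.left i) • r.right i = x := by
  have h2 := congrArg (TensorProduct.lid k A) (Coalgebra.sum_counit_tmul_eq (R := k) r)
  rw [map_sum] at h2
  simp only [TensorProduct.lid_tmul, one_smul] at h2
  exact h2

lemma sum_counit_smul_map_right {x : A} {ι : Type*} (r : Coalgebra.Repr k x ι) (G : A →ₗ[k] A) :
    ∑ i ∈ r.index, Coalgebra.counit (R := k) (r.left i) • G (r.right i) = G x := by
  simp_rw [← map_smul]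
  rw [← map_sum, sum_counit_smul_right']

lemma sum_counit_smul_map_left {x : A} {ι : Type*} (r : Coalgebra.Repr k x ι) (G : A →ₗ[k] A) :
    ∑ i ∈ r.index, Coalgebra.counit (R := k) (r.right i) • G (r.left i) = G x := by
  simp_rw [← map_smul]
  rw [← map_sum, sum_counit_smul_left']

lemma antipode_one' : antipode (R := k) (1 : A) = 1 := by
  have := mul_antipode_rTensor_comul_apply (R := k) (a := (1 : A))
  rw [Bialgebra.comul_one, Algebra.TensorProduct.one_def] at this
  simpa using this

lemma sum_mul_antipode_mul_collapse {x y : A} {ι₁ ι₂ : Type*} (rx : Coalgebra.Repr k x ι₁) (ry : Coalgebra.Repr k y ι₂) :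
    ∑ j ∈ rx.index, ∑ q ∈ ry.index,
      (rx.left j * ry.left q) * antipode (R := k) (rx.right j * ry.right q)
      = algebraMap k A (Coalgebra.counit (R := k) x * Coalgebra.counit (R := k) y) := by
  let rxy : Coalgebra.Repr k (x * y) (ι₁ × ι₂) :=
    { index := rx.index ×ˢ ry.index
      left := fun p => rx.left p.1 * ry.left p.2
      right := fun p => rx.right p.1 * ry.right p.2
      eq := by
        rw [Bialgebra.comul_mul, ← rx.eq, ← ry.eq, Finset.sum_mul_sum, Finset.sum_product]
        simp [Algebra.TensorProduct.tmul_mul_tmul] }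
  have h := HopfAlgebra.sum_mul_antipode_eq_algebraMap_counit (R := k) rxy
  rw [Finset.sum_product (f := fun p => rxy.left p * antipode (R := k) (rxy.right p))] at h
  rw [h, Bialgebra.counit_mul]

def fold3 (f g h : A →ₗ[k] A) : A ⊗[k] (A ⊗[k] A) →ₗ[k] A :=
  LinearMap.mul' k A ∘ₗ TensorProduct.map f (LinearMap.mul' k A ∘ₗ TensorProduct.map g h)

@[simp] lemma fold3_tmul (f g h : A →ₗ[k] A) (x y z : A) :
    fold3 f g h (x ⊗ₜ[k] (y ⊗ₜ[k] z)) = f x * (g y * h z) := by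
  simp [fold3]

lemma coassoc_reindex {x : A} {ι : Type*} (r : Coalgebra.Repr k x ι)
    (r1 : (i : ι) → Coalgebra.Repr k (r.left i) (A × A))
    (r2 : (i : ι) → Coalgebra.Repr k (r.right i) (A × A)) (M : A ⊗[k] (A ⊗[k] A) →ₗ[k] A) :
    ∑ i ∈ r.index, ∑ j ∈ (r2 i).index,
      M (r.left i ⊗ₜ[k] ((r2 i).left j ⊗ₜ[k] (r2 i).right j)) =
    ∑ i ∈ r.index, ∑ j ∈ (r1 i).index,
      M ((r1 i).left j ⊗ₜ[k] ((r1 i).right j ⊗ₜ[k] r.right i)) := by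
  have h2 := congrArg M (Coalgebra.sum_tmul_tmul_eq (R := k) r r1 r2)
  rw [map_sum, map_sum] at h2
  simp only [map_sum] at h2
  exact h2.symm

theorem antipode_mul' (a b : A) :
    antipode (R := k) (a * b) = antipode (R := k) b * antipode (R := k) a := by
  let ra := Coalgebra.Repr.arbitrary k a
  let ra1 : (i : A × A) → Coalgebra.Repr k (ra.left i) (A × A) := fun i => Coalgebra.Repr.arbitrary k _
  let ra2 : (i : A × A) → Coalgebra.Repr k (ra.right i) (A × A) := fun i => Coalgebra.Repr.arbitrary k _
  let rb := Coalgebra.Repr.arbitrary k b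
  let rb1 : (p : A × A) → Coalgebra.Repr k (rb.left p) (A × A) := fun p => Coalgebra.Repr.arbitrary k _
  let rb2 : (p : A × A) → Coalgebra.Repr k (rb.right p) (A × A) := fun p => Coalgebra.Repr.arbitrary k _
  have key :
      ∑ p ∈ rb.index, ∑ i ∈ ra.index, ∑ j ∈ (ra2 i).index, ∑ q ∈ (rb2 p).index,
        (antipode (R := k) (rb.left p) * antipode (R := k) (ra.left i)) *
          (((ra2 i).left j * (rb2 p).left q) *
            antipode (R := k) ((ra2 i).right j * (rb2 p).right q))
        = antipode (R := k) b * antipode (R := k) a := by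
    calc
      ∑ p ∈ rb.index, ∑ i ∈ ra.index, ∑ j ∈ (ra2 i).index, ∑ q ∈ (rb2 p).index,
        (antipode (R := k) (rb.left p) * antipode (R := k) (ra.left i)) *
          (((ra2 i).left j * (rb2 p).left q) *
            antipode (R := k) ((ra2 i).right j * (rb2 p).right q))
          = ∑ p ∈ rb.index, ∑ i ∈ ra.index,
              (antipode (R := k) (rb.left p) * antipode (R := k) (ra.left i)) *
              algebraMap k A (Coalgebra.counit (R := k) (ra.right i) *
                Coalgebra.counit (R := k) (rb.right p)) := by
        refine Finset.sum_congr rfl fun p _ => Finset.sum_congr rfl fun i _ => ?_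
        rw [← sum_mul_antipode_mul_collapse (ra2 i) (rb2 p), Finset.mul_sum]
        exact Finset.sum_congr rfl fun j _ => by rw [Finset.mul_sum]
      _ = (∑ p ∈ rb.index, Coalgebra.counit (R := k) (rb.right p) • antipode (R := k) (rb.left p)) *
            (∑ i ∈ ra.index, Coalgebra.counit (R := k) (ra.right i) • antipode (R := k) (ra.left i)) := by
        rw [Finset.sum_mul_sum]
        refine Finset.sum_congr rfl fun p _ => Finset.sum_congr rfl fun i _ => ?_
        rw [mul_algebraMap_right, smul_mul_smul_comm, mul_comm]
      _ = antipode (R := k) b * antipode (R := k) a := by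
        rw [sum_counit_smul_map_left ra (antipode (R := k)),
          sum_counit_smul_map_left rb (antipode (R := k))]
  have key2 :
      ∑ p ∈ rb.index, ∑ i ∈ ra.index, ∑ j ∈ (ra2 i).index, ∑ q ∈ (rb2 p).index,
        (antipode (R := k) (rb.left p) * antipode (R := k) (ra.left i)) *
          (((ra2 i).left j * (rb2 p).left q) *
            antipode (R := k) ((ra2 i).right j * (rb2 p).right q))
        = antipode (R := k) (a * b) := by
    calc
      ∑ p ∈ rb.index, ∑ i ∈ ra.index, ∑ j ∈ (ra2 i).index, ∑ q ∈ (rb2 p).index,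
        (antipode (R := k) (rb.left p) * antipode (R := k) (ra.left i)) *
          (((ra2 i).left j * (rb2 p).left q) *
            antipode (R := k) ((ra2 i).right j * (rb2 p).right q))
          = ∑ p ∈ rb.index, ∑ q ∈ (rb2 p).index, ∑ i ∈ ra.index, ∑ j ∈ (ra2 i).index,
              (antipode (R := k) (rb.left p) * antipode (R := k) (ra.left i)) *
              (((ra2 i).left j * (rb2 p).left q) *
                antipode (R := k) ((ra2 i).right j * (rb2 p).right q)) := by
        refine Finset.sum_congr rfl fun p _ => ?_
        rw [show (∑ i ∈ ra.index, ∑ j ∈ (ra2 i).index, ∑ q ∈ (rb2 p).index,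
            (antipode (R := k) (rb.left p) * antipode (R := k) (ra.left i)) *
            (((ra2 i).left j * (rb2 p).left q) *
              antipode (R := k) ((ra2 i).right j * (rb2 p).right q)))
            = ∑ i ∈ ra.index, ∑ q ∈ (rb2 p).index, ∑ j ∈ (ra2 i).index,
            (antipode (R := k) (rb.left p) * antipode (R := k) (ra.left i)) *
            (((ra2 i).left j * (rb2 p).left q) *
              antipode (R := k) ((ra2 i).right j * (rb2 p).right q))
          from Finset.sum_congr rfl fun i _ => Finset.sum_comm]
        exact Finset.sum_comm
      _ = ∑ p ∈ rb.index, ∑ q ∈ (rb2 p).index, ∑ i ∈ ra.index, ∑ j ∈ (ra1 i).index,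
            (antipode (R := k) (rb.left p) * antipode (R := k) ((ra1 i).left j)) *
            ((((ra1 i).right j) * (rb2 p).left q) *
              antipode (R := k) (ra.right i * (rb2 p).right q)) := by
        refine Finset.sum_congr rfl fun p _ => Finset.sum_congr rfl fun q _ => ?_
        have h := coassoc_reindex ra ra1 ra2
          (fold3 ((LinearMap.mulLeft k (antipode (R := k) (rb.left p))) ∘ₗ antipode (R := k))
            (LinearMap.mulRight k ((rb2 p).left q))
            (antipode (R := k) ∘ₗ LinearMap.mulRight k ((rb2 p).right q)))
        simp only [fold3_tmul, LinearMap.comp_apply, LinearMap.mulLeft_apply,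
          LinearMap.mulRight_apply] at h
        simp only [← mul_assoc] at h ⊢
        exact h
      _ = ∑ p ∈ rb.index, ∑ q ∈ (rb2 p).index, ∑ i ∈ ra.index,
            Coalgebra.counit (R := k) (ra.left i) •
              (antipode (R := k) (rb.left p) *
                ((rb2 p).left q * antipode (R := k) (ra.right i * (rb2 p).right q))) := by
        refine Finset.sum_congr rfl fun p _ => Finset.sum_congr rfl fun q _ =>
          Finset.sum_congr rfl fun i _ => ?_
        calc
          ∑ j ∈ (ra1 i).index,
            (antipode (R := k) (rb.left p) * antipode (R := k) ((ra1 i).left j)) *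
            ((((ra1 i).right j) * (rb2 p).left q) *
              antipode (R := k) (ra.right i * (rb2 p).right q))
              = antipode (R := k) (rb.left p) *
                ((∑ j ∈ (ra1 i).index, antipode (R := k) ((ra1 i).left j) * (ra1 i).right j) *
                  ((rb2 p).left q * antipode (R := k) (ra.right i * (rb2 p).right q))) := by
            rw [Finset.sum_mul, Finset.mul_sum]
            refine Finset.sum_congr rfl fun j _ => ?_
            simp only [mul_assoc]
          _ = Coalgebra.counit (R := k) (ra.left i) •
              (antipode (R := k) (rb.left p) *
                ((rb2 p).left q * antipode (R := k) (ra.right i * (rb2 p).right q))) := by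
            rw [HopfAlgebra.sum_antipode_mul_eq_algebraMap_counit (ra1 i), ← Algebra.smul_def, mul_smul_comm]
      _ = ∑ p ∈ rb.index, ∑ q ∈ (rb2 p).index,
            antipode (R := k) (rb.left p) *
              ((rb2 p).left q * antipode (R := k) (a * (rb2 p).right q)) := by
        refine Finset.sum_congr rfl fun p _ => Finset.sum_congr rfl fun q _ => ?_
        have h := sum_counit_smul_map_right ra
          ((LinearMap.mulLeft k (antipode (R := k) (rb.left p))) ∘ₗ
            (LinearMap.mulLeft k ((rb2 p).left q)) ∘ₗ (antipode (R := k)) ∘ₗ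
            (LinearMap.mulRight k ((rb2 p).right q)))
        simp only [LinearMap.comp_apply, LinearMap.mulLeft_apply, LinearMap.mulRight_apply] at h
        exact h
      _ = ∑ p ∈ rb.index, ∑ q ∈ (rb1 p).index,
            antipode (R := k) ((rb1 p).left q) *
              ((rb1 p).right q * antipode (R := k) (a * rb.right p)) := by
        have h := coassoc_reindex rb rb1 rb2
          (fold3 (antipode (R := k)) LinearMap.id (antipode (R := k) ∘ₗ LinearMap.mulLeft k a))
        simp only [fold3_tmul, LinearMap.comp_apply, LinearMap.mulLeft_apply,
          LinearMap.id_apply] at h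
        exact h
      _ = ∑ p ∈ rb.index, Coalgebra.counit (R := k) (rb.left p) •
            antipode (R := k) (a * rb.right p) := by
        refine Finset.sum_congr rfl fun p _ => ?_
        calc
          ∑ q ∈ (rb1 p).index, antipode (R := k) ((rb1 p).left q) *
              ((rb1 p).right q * antipode (R := k) (a * rb.right p))
              = (∑ q ∈ (rb1 p).index, antipode (R := k) ((rb1 p).left q) * (rb1 p).right q) *
                antipode (R := k) (a * rb.right p) := by
            rw [Finset.sum_mul]
            exact Finset.sum_congr rfl fun q _ => by rw [mul_assoc]
          _ = Coalgebra.counit (R := k) (rb.left p) • antipode (R := k) (a * rb.right p) := by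
            rw [HopfAlgebra.sum_antipode_mul_eq_algebraMap_counit (rb1 p), ← Algebra.smul_def]
      _ = antipode (R := k) (a * b) := by
        have h := sum_counit_smul_map_right rb ((antipode (R := k)) ∘ₗ (LinearMap.mulLeft k a))
        simp only [LinearMap.comp_apply, LinearMap.mulLeft_apply] at h
        exact h
  rw [← key2, key]

def fold3r (f g h : A →ₗ[k] A) : A ⊗[k] (A ⊗[k] A) →ₗ[k] A :=
  LinearMap.mul' k A ∘ₗ
    TensorProduct.map
      (LinearMap.mul' k A ∘ₗ TensorProduct.map h g ∘ₗ (TensorProduct.comm k A A).toLinearMap) f ∘ₗ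
    (TensorProduct.comm k A (A ⊗[k] A)).toLinearMap

@[simp] lemma fold3r_tmul (f g h : A →ₗ[k] A) (x y z : A) :
    fold3r f g h (x ⊗ₜ[k] (y ⊗ₜ[k] z)) = h z * g y * f x := by
  simp [fold3r]

lemma sum_tmul_mul_sum_tmul {B : Type*} [Ring B] [Algebra k B] {ι₁ ι₂ : Type*}
    (s : Finset ι₁) (t : Finset ι₂)
    (f : ι₁ → A) (g : ι₁ → B) (f' : ι₂ → A) (g' : ι₂ → B) :
    ((∑ p ∈ s, f p ⊗ₜ[k] g p) * (∑ q ∈ t, f' q ⊗ₜ[k] g' q))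
      = ∑ p ∈ s, ∑ q ∈ t, (f p * f' q) ⊗ₜ[k] (g p * g' q) := by
  rw [Finset.sum_mul_sum]
  simp [Algebra.TensorProduct.tmul_mul_tmul]

lemma rel_a {ρ : A ⊗[k] A} {Sf : Finset (A × A)} (hρ : ρ = ∑ p ∈ Sf, p.1 ⊗ₜ[k] p.2)
    (hcom : ∀ x : A, ρ * Coalgebra.comul (R := k) x =
      (TensorProduct.comm k A A) (Coalgebra.comul (R := k) x) * ρ)
    (U : A) (hU : U = ∑ p ∈ Sf, antipode (R := k) p.2 * p.1)
    (x : A) {ι : Type*} (r : Coalgebra.Repr k x ι) :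
    ∑ t ∈ r.index, antipode (R := k) (r.right t) * U * r.left t
      = Coalgebra.counit (R := k) x • U := by
  have h := hcom x
  rw [← r.eq, hρ, map_sum] at h
  simp only [TensorProduct.comm_tmul] at h
  rw [sum_tmul_mul_sum_tmul (k := k) Sf r.index _ _ (fun t => r.left t) (fun t => r.right t),
    sum_tmul_mul_sum_tmul (k := k) r.index Sf (fun t => r.right t) (fun t => r.left t) _ _] at h
  -- apply F₁ : y ⊗ z ↦ S z * y
  have h2 := congrArg (LinearMap.mul' k A ∘ₗ
    TensorProduct.map (antipode (R := k)) LinearMap.id ∘ₗ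
      (TensorProduct.comm k A A).toLinearMap) h
  simp only [map_sum, LinearMap.comp_apply, LinearEquiv.coe_coe, TensorProduct.comm_tmul,
    TensorProduct.map_tmul, LinearMap.mul'_apply, LinearMap.id_apply] at h2
  -- h2 : ∑ p ∈ Sf, ∑ t, S (p.2 * r.right t) * (p.1 * r.left t)
  --    = ∑ t, ∑ p, S (r.left t * p.2) * (r.right t * p.1)
  calc
    ∑ t ∈ r.index, antipode (R := k) (r.right t) * U * r.left t
        = ∑ p ∈ Sf, ∑ t ∈ r.index,
            antipode (R := k) (p.2 * r.right t) * (p.1 * r.left t) := by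
      rw [Finset.sum_comm]
      refine Finset.sum_congr rfl fun t _ => ?_
      rw [hU, Finset.mul_sum, Finset.sum_mul]
      refine Finset.sum_congr rfl fun p _ => ?_
      rw [antipode_mul']
      simp only [mul_assoc]
    _ = ∑ t ∈ r.index, ∑ p ∈ Sf,
          antipode (R := k) (r.left t * p.2) * (r.right t * p.1) := h2
    _ = ∑ p ∈ Sf, Coalgebra.counit (R := k) x • (antipode (R := k) p.2 * p.1) := by
      rw [Finset.sum_comm]
      refine Finset.sum_congr rfl fun p _ => ?_
      calc
        ∑ t ∈ r.index, antipode (R := k) (r.left t * p.2) * (r.right t * p.1)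
            = (∑ t ∈ r.index, antipode (R := k) p.2 *
                (antipode (R := k) (r.left t) * r.right t)) * p.1 := by
          rw [Finset.sum_mul]
          refine Finset.sum_congr rfl fun t _ => ?_
          rw [antipode_mul']
          simp only [mul_assoc]
        _ = Coalgebra.counit (R := k) x • (antipode (R := k) p.2 * p.1) := by
          rw [← Finset.mul_sum, HopfAlgebra.sum_antipode_mul_eq_algebraMap_counit (R := k) r,
            mul_algebraMap_right, smul_mul_assoc]
    _ = Coalgebra.counit (R := k) x • U := by
      rw [← Finset.smul_sum, hU]

lemma u_mul_eq {ρ : A ⊗[k] A} {Sf : Finset (A × A)} (hρ : ρ = ∑ p ∈ Sf, p.1 ⊗ₜ[k] p.2)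
    (hcom : ∀ x : A, ρ * Coalgebra.comul (R := k) x =
      (TensorProduct.comm k A A) (Coalgebra.comul (R := k) x) * ρ)
    (U : A) (hU : U = ∑ p ∈ Sf, antipode (R := k) p.2 * p.1)
    (x : A) :
    U * x = antipode (R := k) (antipode (R := k) x) * U := by
  let r := Coalgebra.Repr.arbitrary k x
  let r1 : (i : A × A) → Coalgebra.Repr k (r.left i) (A × A) := fun i => Coalgebra.Repr.arbitrary k _
  let r2 : (i : A × A) → Coalgebra.Repr k (r.right i) (A × A) := fun i => Coalgebra.Repr.arbitrary k _
  have reindex := coassoc_reindex r r1 r2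
    (fold3r LinearMap.id (LinearMap.mulRight k U ∘ₗ antipode (R := k))
      (antipode (R := k) ∘ₗ antipode (R := k)))
  simp only [fold3r_tmul, LinearMap.comp_apply, LinearMap.mulRight_apply,
    LinearMap.id_apply] at reindex
  -- reindex : ∑ i ∑ j, S(S((r2 i).right j)) * (S((r2 i).left j) * U) * r.left i
  --         = ∑ i ∑ j, S(S(r.right i)) * (S((r1 i).right j) * U) * (r1 i).left j
  have evalA : (∑ i ∈ r.index, ∑ j ∈ (r1 i).index,
      antipode (R := k) (antipode (R := k) (r.right i)) *
        (antipode (R := k) ((r1 i).right j) * U) * (r1 i).left j)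
      = antipode (R := k) (antipode (R := k) x) * U := by
    calc
      ∑ i ∈ r.index, ∑ j ∈ (r1 i).index,
        antipode (R := k) (antipode (R := k) (r.right i)) *
          (antipode (R := k) ((r1 i).right j) * U) * (r1 i).left j
          = ∑ i ∈ r.index, Coalgebra.counit (R := k) (r.left i) •
              (antipode (R := k) (antipode (R := k) (r.right i)) * U) := by
        refine Finset.sum_congr rfl fun i _ => ?_
        have inner := rel_a hρ hcom U hU (r.left i) (r1 i)
        calc
          ∑ j ∈ (r1 i).index,
            antipode (R := k) (antipode (R := k) (r.right i)) *
              (antipode (R := k) ((r1 i).right j) * U) * (r1 i).left j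
              = antipode (R := k) (antipode (R := k) (r.right i)) *
                ∑ j ∈ (r1 i).index, antipode (R := k) ((r1 i).right j) * U * (r1 i).left j := by
            rw [Finset.mul_sum]
            refine Finset.sum_congr rfl fun j _ => ?_
            simp only [mul_assoc]
          _ = Coalgebra.counit (R := k) (r.left i) •
              (antipode (R := k) (antipode (R := k) (r.right i)) * U) := by
            rw [inner, mul_smul_comm]
      _ = antipode (R := k) (antipode (R := k) x) * U := by
        have h := sum_counit_smul_map_right r
          (LinearMap.mulRight k U ∘ₗ antipode (R := k) ∘ₗ antipode (R := k))
        simp only [LinearMap.comp_apply, LinearMap.mulRight_apply] at h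
        exact h
  have evalB : (∑ i ∈ r.index, ∑ j ∈ (r2 i).index,
      antipode (R := k) (antipode (R := k) ((r2 i).right j)) *
        (antipode (R := k) ((r2 i).left j) * U) * r.left i)
      = U * x := by
    calc
      ∑ i ∈ r.index, ∑ j ∈ (r2 i).index,
        antipode (R := k) (antipode (R := k) ((r2 i).right j)) *
          (antipode (R := k) ((r2 i).left j) * U) * r.left i
          = ∑ i ∈ r.index, Coalgebra.counit (R := k) (r.right i) • (U * r.left i) := by
        refine Finset.sum_congr rfl fun i _ => ?_
        calc
          ∑ j ∈ (r2 i).index,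
            antipode (R := k) (antipode (R := k) ((r2 i).right j)) *
              (antipode (R := k) ((r2 i).left j) * U) * r.left i
              = (∑ j ∈ (r2 i).index,
                  antipode (R := k) ((r2 i).left j * antipode (R := k) ((r2 i).right j))) *
                  (U * r.left i) := by
            rw [Finset.sum_mul]
            refine Finset.sum_congr rfl fun j _ => ?_
            rw [antipode_mul']
            simp only [mul_assoc]
          _ = Coalgebra.counit (R := k) (r.right i) • (U * r.left i) := by
            rw [← map_sum, HopfAlgebra.sum_mul_antipode_eq_algebraMap_counit (R := k) (r2 i),
              Algebra.algebraMap_eq_smul_one, map_smul, antipode_one', smul_mul_assoc, one_mul]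
      _ = U * x := by
        have h := sum_counit_smul_map_left r (LinearMap.mulLeft k U)
        simp only [LinearMap.mulLeft_apply] at h
        exact h
  rw [← evalB, reindex, evalA]

/-- contraction `x ⊗ (y ⊗ z) ↦ ε y • (x ⊗ z)` -/
def ctrM : A ⊗[k] (A ⊗[k] A) →ₗ[k] A ⊗[k] A :=
  TensorProduct.map LinearMap.id
    ((TensorProduct.lid k A).toLinearMap ∘ₗ LinearMap.rTensor A (Coalgebra.counit (R := k)))

@[simp] lemma ctrM_tmul (x y z : A) :
    ctrM (x ⊗ₜ[k] (y ⊗ₜ[k] z)) = Coalgebra.counit (R := k) y • (x ⊗ₜ[k] z) := by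
  simp [ctrM, TensorProduct.tmul_smul]

/-- contraction `x ⊗ w ↦ ε x • w` -/
def ctrL : A ⊗[k] (A ⊗[k] A) →ₗ[k] A ⊗[k] A :=
  (TensorProduct.lid k (A ⊗[k] A)).toLinearMap ∘ₗ
    LinearMap.rTensor (A ⊗[k] A) (Coalgebra.counit (R := k))

@[simp] lemma ctrL_tmul (x : A) (w : A ⊗[k] A) :
    ctrL (x ⊗ₜ[k] w) = Coalgebra.counit (R := k) x • w := by
  simp [ctrL]

/-- contraction `x ⊗ y ↦ ε y • x` -/
def ctr2R : A ⊗[k] A →ₗ[k] A :=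
  (TensorProduct.rid k A).toLinearMap ∘ₗ LinearMap.lTensor A (Coalgebra.counit (R := k))

@[simp] lemma ctr2R_tmul (x y : A) :
    ctr2R (x ⊗ₜ[k] y) = Coalgebra.counit (R := k) y • x := by
  simp [ctr2R]

/-- contraction `x ⊗ y ↦ ε x • y` -/
def ctr2L : A ⊗[k] A →ₗ[k] A :=
  (TensorProduct.lid k A).toLinearMap ∘ₗ LinearMap.rTensor A (Coalgebra.counit (R := k))

@[simp] lemma ctr2L_tmul (x y : A) :
    ctr2L (x ⊗ₜ[k] y) = Coalgebra.counit (R := k) x • y := by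
  simp [ctr2L]

/-- fold `y ⊗ z ↦ S z * y` -/
def foldF1 : A ⊗[k] A →ₗ[k] A :=
  LinearMap.mul' k A ∘ₗ TensorProduct.map (antipode (R := k)) LinearMap.id ∘ₗ
    (TensorProduct.comm k A A).toLinearMap

@[simp] lemma foldF1_tmul (y z : A) :
    foldF1 (y ⊗ₜ[k] z) = antipode (R := k) z * y := by
  simp [foldF1]

lemma ctr2L_comul (y : A) : ctr2L (Coalgebra.comul (R := k) y) = y := by
  simp [ctr2L, Coalgebra.rTensor_counit_comul]

lemma ctrM_tmul_gen (x : A) (w : A ⊗[k] A) : ctrM (x ⊗ₜ[k] w) = x ⊗ₜ[k] ctr2L w := by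
  induction w using TensorProduct.induction_on with
  | zero => simp [TensorProduct.tmul_zero]
  | tmul y z => simp [TensorProduct.smul_tmul, TensorProduct.tmul_smul]
  | add w1 w2 h1 h2 =>
      rw [TensorProduct.tmul_add, map_add, h1, h2, map_add, TensorProduct.tmul_add]

lemma ctrL_assoc (w : A ⊗[k] A) (c : A) :
    ctrL (TensorProduct.assoc k A A A (w ⊗ₜ[k] c)) = ctr2L w ⊗ₜ[k] c := by
  induction w using TensorProduct.induction_on with
  | zero =>
      rw [TensorProduct.zero_tmul, LinearEquiv.map_zero, map_zero, map_zero,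
        TensorProduct.zero_tmul]
  | tmul y z => simp [TensorProduct.assoc_tmul, TensorProduct.smul_tmul']
  | add w1 w2 h1 h2 =>
      rw [TensorProduct.add_tmul, LinearEquiv.map_add, map_add, h1, h2, map_add,
        TensorProduct.add_tmul]

/-- `w ↦ Σ S(w₁) w₂` -/
def foldS : A ⊗[k] A →ₗ[k] A :=
  LinearMap.mul' k A ∘ₗ TensorProduct.map (antipode (R := k)) LinearMap.id

@[simp] lemma foldS_tmul (x y : A) : foldS (x ⊗ₜ[k] y) = antipode (R := k) x * y := by
  simp [foldS]

lemma foldS_comul (y : A) :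
    foldS (Coalgebra.comul (R := k) y) = algebraMap k A (Coalgebra.counit (R := k) y) := by
  have := HopfAlgebra.mul_antipode_rTensor_comul_apply (R := k) (a := y)
  rw [← this, foldS]
  rfl

/-- `w ↦ Σ w₁ S(w₂)` -/
def foldS' : A ⊗[k] A →ₗ[k] A :=
  LinearMap.mul' k A ∘ₗ TensorProduct.map LinearMap.id (antipode (R := k))

@[simp] lemma foldS'_tmul (x y : A) : foldS' (x ⊗ₜ[k] y) = x * antipode (R := k) y := by
  simp [foldS']

lemma foldS'_comul (y : A) :
    foldS' (Coalgebra.comul (R := k) y) = algebraMap k A (Coalgebra.counit (R := k) y) := by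
  have := HopfAlgebra.mul_antipode_lTensor_comul_apply (R := k) (a := y)
  rw [← this, foldS']
  rfl

/-- `x ⊗ (y ⊗ z) ↦ (Σ S(x₁) x₂-fold on first slot) ⊗ rest`, i.e. `(foldS w) ⊗ c` on `assoc (w ⊗ c)` -/
def G5 : A ⊗[k] (A ⊗[k] A) →ₗ[k] A ⊗[k] A :=
  TensorProduct.map foldS LinearMap.id ∘ₗ (TensorProduct.assoc k A A A).symm.toLinearMap

@[simp] lemma G5_tmul (x y z : A) :
    G5 (x ⊗ₜ[k] (y ⊗ₜ[k] z)) = (antipode (R := k) x * y) ⊗ₜ[k] z := by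
  simp [G5, TensorProduct.assoc_symm_tmul]

lemma G5_assoc (w : A ⊗[k] A) (c : A) :
    G5 (TensorProduct.assoc k A A A (w ⊗ₜ[k] c)) = foldS w ⊗ₜ[k] c := by
  simp [G5]

/-- `x ⊗ w ↦ x ⊗ foldS' w` -/
def H3 : A ⊗[k] (A ⊗[k] A) →ₗ[k] A ⊗[k] A :=
  TensorProduct.map LinearMap.id foldS'

@[simp] lemma H3_tmul (x y z : A) :
    H3 (x ⊗ₜ[k] (y ⊗ₜ[k] z)) = x ⊗ₜ[k] (y * antipode (R := k) z) := by
  simp [H3]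

lemma H3_tmul_gen (x : A) (w : A ⊗[k] A) : H3 (x ⊗ₜ[k] w) = x ⊗ₜ[k] foldS' w := by
  induction w using TensorProduct.induction_on with
  | zero => simp [TensorProduct.tmul_zero]
  | tmul y z => simp
  | add w1 w2 h1 h2 =>
      rw [TensorProduct.tmul_add, map_add, h1, h2, map_add, TensorProduct.tmul_add]


end DrinfeldAux

variable (k A : Type*) [CommRing k] [Ring A] [HopfAlgebra k A]

open DrinfeldAux Coalgebra HopfAlgebra

set_option maxHeartbeats 2000000

/-- (Drinfeld) In a quasitriangular Hopf algebra, the element `u = Σ s(e') e` is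
invertible and `s²(x) = u x u⁻¹` for all `x ∈ A`. -/
theorem drinfeld_u_invertible_antipode_sq (ρ : A ⊗[k] A) (h : IsQuasitriangular k A ρ) :
    ∃ uinv : A, uElt k A ρ * uinv = 1 ∧ uinv * uElt k A ρ = 1 ∧
      ∀ x : A, HopfAlgebra.antipode (R := k) (HopfAlgebra.antipode (R := k) x) =
        uElt k A ρ * x * uinv := by
  obtain ⟨hUnit, hcom, hax2, hax3⟩ := h
  obtain ⟨Uu, hUu⟩ := hUnit
  obtain ⟨Sf, hρ⟩ := TensorProduct.exists_finset (R := k) ρ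
  have expand12 : rho12 k A ρ = ∑ p ∈ Sf, p.1 ⊗ₜ[k] (p.2 ⊗ₜ[k] (1 : A)) := by
    rw [rho12, hρ]
    simp [map_sum]
  have expand13 : rho13 k A ρ = ∑ p ∈ Sf, p.1 ⊗ₜ[k] ((1 : A) ⊗ₜ[k] p.2) := by
    rw [rho13, hρ]
    simp [map_sum]
  have expand23 : rho23 k A ρ = ∑ p ∈ Sf, (1 : A) ⊗ₜ[k] (p.1 ⊗ₜ[k] p.2) := by
    rw [rho23, hρ, TensorProduct.tmul_sum]
  -- P1 : Σ ε(b) • a = 1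
  have hP1 : (∑ p ∈ Sf, Coalgebra.counit (R := k) p.2 • p.1) = 1 := by
    have hprod : rho13 k A ρ * rho12 k A ρ
        = ∑ p ∈ Sf, ∑ m ∈ Sf, (p.1 * m.1) ⊗ₜ[k] (m.2 ⊗ₜ[k] p.2) := by
      rw [expand13, expand12, sum_tmul_mul_sum_tmul (k := k) Sf Sf Prod.fst
        (fun p => (1:A) ⊗ₜ[k] p.2) Prod.fst (fun m => m.2 ⊗ₜ[k] (1:A))]
      refine Finset.sum_congr rfl fun p _ => Finset.sum_congr rfl fun m _ => ?_
      rw [Algebra.TensorProduct.tmul_mul_tmul, one_mul, mul_one]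
    have hL : ctrM (TensorProduct.map LinearMap.id (Coalgebra.comul (R := k)) ρ) = ρ := by
      nth_rewrite 1 [hρ]
      rw [map_sum, map_sum]
      calc ∑ p ∈ Sf, ctrM (TensorProduct.map LinearMap.id (Coalgebra.comul (R := k))
            (p.1 ⊗ₜ[k] p.2))
          = ∑ p ∈ Sf, p.1 ⊗ₜ[k] p.2 := by
            refine Finset.sum_congr rfl fun p _ => ?_
            rw [TensorProduct.map_tmul, LinearMap.id_apply, ctrM_tmul_gen, ctr2L_comul]
        _ = ρ := hρ.symm
    have hR : ctrM (∑ p ∈ Sf, ∑ m ∈ Sf, (p.1 * m.1) ⊗ₜ[k] (m.2 ⊗ₜ[k] p.2))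
        = ρ * ((∑ p ∈ Sf, Coalgebra.counit (R := k) p.2 • p.1) ⊗ₜ[k] (1 : A)) := by
      rw [map_sum, hρ, Finset.sum_mul]
      refine Finset.sum_congr rfl fun p _ => ?_
      rw [map_sum]
      simp only [ctrM_tmul]
      rw [Algebra.TensorProduct.tmul_mul_tmul, mul_one, Finset.mul_sum, TensorProduct.sum_tmul]
      refine Finset.sum_congr rfl fun m _ => ?_
      rw [mul_smul_comm, TensorProduct.smul_tmul']
    have hw : ρ * ((∑ p ∈ Sf, Coalgebra.counit (R := k) p.2 • p.1) ⊗ₜ[k] (1 : A)) = ρ :=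
      hR.symm.trans ((congrArg ctrM (hax2.trans hprod)).symm.trans hL)
    have hw1 : ((∑ p ∈ Sf, Coalgebra.counit (R := k) p.2 • p.1) ⊗ₜ[k] (1 : A))
        = (1 : A ⊗[k] A) := by
      calc ((∑ p ∈ Sf, Coalgebra.counit (R := k) p.2 • p.1) ⊗ₜ[k] (1 : A))
          = (↑Uu⁻¹ * ρ) * ((∑ p ∈ Sf, Coalgebra.counit (R := k) p.2 • p.1) ⊗ₜ[k] (1 : A)) := by
            rw [← hUu, Uu.inv_mul, one_mul]
        _ = ↑Uu⁻¹ * ρ := by rw [mul_assoc, hw]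
        _ = 1 := by rw [← hUu, Uu.inv_mul]
    have h3 := congrArg (ctr2R (k := k) (A := A)) hw1
    rw [Algebra.TensorProduct.one_def] at h3
    simp only [ctr2R_tmul, Bialgebra.counit_one, one_smul] at h3
    exact h3
  -- P2 : Σ ε(a) • b = 1
  have hP2 : (∑ p ∈ Sf, Coalgebra.counit (R := k) p.1 • p.2) = 1 := by
    have hprod : rho13 k A ρ * rho23 k A ρ
        = ∑ p ∈ Sf, ∑ m ∈ Sf, p.1 ⊗ₜ[k] (m.1 ⊗ₜ[k] (p.2 * m.2)) := by
      rw [expand13, expand23, sum_tmul_mul_sum_tmul (k := k) Sf Sf Prod.fst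
        (fun p => (1:A) ⊗ₜ[k] p.2) (fun m => (1:A)) (fun m => m.1 ⊗ₜ[k] m.2)]
      refine Finset.sum_congr rfl fun p _ => Finset.sum_congr rfl fun m _ => ?_
      rw [Algebra.TensorProduct.tmul_mul_tmul, one_mul, mul_one]
    have hL : ctrL (TensorProduct.assoc k A A A
        (TensorProduct.map (Coalgebra.comul (R := k)) LinearMap.id ρ)) = ρ := by
      nth_rewrite 1 [hρ]
      rw [map_sum, map_sum, map_sum]
      calc ∑ p ∈ Sf, ctrL (TensorProduct.assoc k A A A
            (TensorProduct.map (Coalgebra.comul (R := k)) LinearMap.id (p.1 ⊗ₜ[k] p.2)))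
          = ∑ p ∈ Sf, p.1 ⊗ₜ[k] p.2 := by
            refine Finset.sum_congr rfl fun p _ => ?_
            rw [TensorProduct.map_tmul, LinearMap.id_apply, ctrL_assoc, ctr2L_comul]
        _ = ρ := hρ.symm
    have hR : ctrL (∑ p ∈ Sf, ∑ m ∈ Sf, p.1 ⊗ₜ[k] (m.1 ⊗ₜ[k] (p.2 * m.2)))
        = ((1 : A) ⊗ₜ[k] (∑ p ∈ Sf, Coalgebra.counit (R := k) p.1 • p.2)) * ρ := by
      rw [map_sum]
      simp only [map_sum, ctrL_tmul]
      rw [Finset.sum_comm, hρ, Finset.mul_sum]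
      refine Finset.sum_congr rfl fun m _ => ?_
      rw [Algebra.TensorProduct.tmul_mul_tmul, one_mul, Finset.sum_mul, TensorProduct.tmul_sum]
      refine Finset.sum_congr rfl fun p _ => ?_
      rw [smul_mul_assoc, TensorProduct.tmul_smul]
    have hw : ((1 : A) ⊗ₜ[k] (∑ p ∈ Sf, Coalgebra.counit (R := k) p.1 • p.2)) * ρ = ρ :=
      hR.symm.trans ((congrArg ctrL (hax3.trans hprod)).symm.trans hL)
    have hw1 : ((1 : A) ⊗ₜ[k] (∑ p ∈ Sf, Coalgebra.counit (R := k) p.1 • p.2))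
        = (1 : A ⊗[k] A) := by
      calc ((1 : A) ⊗ₜ[k] (∑ p ∈ Sf, Coalgebra.counit (R := k) p.1 • p.2))
          = ((1 : A) ⊗ₜ[k] (∑ p ∈ Sf, Coalgebra.counit (R := k) p.1 • p.2)) * (ρ * ↑Uu⁻¹) := by
            rw [← hUu, Uu.mul_inv, mul_one]
        _ = ρ * ↑Uu⁻¹ := by rw [← mul_assoc, hw]
        _ = 1 := by rw [← hUu, Uu.mul_inv]
    have h3 := congrArg (ctr2L (k := k) (A := A)) hw1
    rw [Algebra.TensorProduct.one_def] at h3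
    simp only [ctr2L_tmul, Bialgebra.counit_one, one_smul] at h3
    exact h3
  have hσ : TensorProduct.map (antipode (R := k)) LinearMap.id ρ
      = ∑ p ∈ Sf, antipode (R := k) p.1 ⊗ₜ[k] p.2 := by
    rw [hρ, map_sum]
    simp
  have hprodB : rho13 k A ρ * rho23 k A ρ
      = ∑ p ∈ Sf, ∑ m ∈ Sf, p.1 ⊗ₜ[k] (m.1 ⊗ₜ[k] (p.2 * m.2)) := by
    rw [expand13, expand23, sum_tmul_mul_sum_tmul (k := k) Sf Sf Prod.fst
      (fun p => (1:A) ⊗ₜ[k] p.2) (fun m => (1:A)) (fun m => m.1 ⊗ₜ[k] m.2)]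
    refine Finset.sum_congr rfl fun p _ => Finset.sum_congr rfl fun m _ => ?_
    rw [Algebra.TensorProduct.tmul_mul_tmul, one_mul, mul_one]
  have hσρ : (TensorProduct.map (antipode (R := k)) LinearMap.id ρ) * ρ = 1 := by
    have hL5 : G5 (TensorProduct.assoc k A A A
        (TensorProduct.map (Coalgebra.comul (R := k)) LinearMap.id ρ)) = 1 := by
      nth_rewrite 1 [hρ]
      rw [map_sum, map_sum, map_sum]
      calc ∑ p ∈ Sf, G5 (TensorProduct.assoc k A A A
            (TensorProduct.map (Coalgebra.comul (R := k)) LinearMap.id (p.1 ⊗ₜ[k] p.2)))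
          = ∑ p ∈ Sf, (1 : A) ⊗ₜ[k] (Coalgebra.counit (R := k) p.1 • p.2) := by
            refine Finset.sum_congr rfl fun p _ => ?_
            rw [TensorProduct.map_tmul, LinearMap.id_apply, G5_assoc, foldS_comul,
              Algebra.algebraMap_eq_smul_one, TensorProduct.smul_tmul]
        _ = (1 : A) ⊗ₜ[k] (∑ p ∈ Sf, Coalgebra.counit (R := k) p.1 • p.2) := by
            rw [TensorProduct.tmul_sum]
        _ = 1 := by rw [hP2, Algebra.TensorProduct.one_def]
    have hR5 : G5 (∑ p ∈ Sf, ∑ m ∈ Sf, p.1 ⊗ₜ[k] (m.1 ⊗ₜ[k] (p.2 * m.2)))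
        = (TensorProduct.map (antipode (R := k)) LinearMap.id ρ) * ρ := by
      rw [map_sum, hσ, hρ, sum_tmul_mul_sum_tmul (k := k) Sf Sf
        (fun p => antipode (R := k) p.1) Prod.snd Prod.fst Prod.snd]
      refine Finset.sum_congr rfl fun p _ => ?_
      rw [map_sum]
      simp only [G5_tmul]
    exact hR5.symm.trans ((congrArg G5 (hax3.trans hprodB)).symm.trans hL5)
  have hρσ : ρ * (TensorProduct.map (antipode (R := k)) LinearMap.id ρ) = 1 := by
    calc ρ * (TensorProduct.map (antipode (R := k)) LinearMap.id ρ)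
        = ρ * (TensorProduct.map (antipode (R := k)) LinearMap.id ρ) * (ρ * ↑Uu⁻¹) := by
          rw [← hUu, Uu.mul_inv, mul_one]
      _ = ρ * (((TensorProduct.map (antipode (R := k)) LinearMap.id ρ) * ρ) * ↑Uu⁻¹) := by
          rw [mul_assoc, mul_assoc]
      _ = 1 := by rw [hσρ, one_mul, ← hUu, Uu.mul_inv]
  set σv := TensorProduct.map (antipode (R := k)) LinearMap.id ρ with hσv
  -- (s ⊗ s) ρ = ρ
  have hss : TensorProduct.map (antipode (R := k)) (antipode (R := k)) ρ = ρ := by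
    have hΦρ : (Algebra.TensorProduct.map (AlgHom.id k A) (Bialgebra.comulAlgHom k A)) ρ
        = rho13 k A ρ * rho12 k A ρ := by
      rw [← hax2, hρ, map_sum, map_sum]
      simp [Algebra.TensorProduct.map_tmul]
    have he12 : (Algebra.TensorProduct.map (AlgHom.id k A)
        (Algebra.TensorProduct.includeLeft (R := k) (A := A) (B := A))) ρ = rho12 k A ρ := by
      rw [expand12]
      nth_rewrite 1 [hρ]
      rw [map_sum]
      simp [Algebra.TensorProduct.map_tmul]
    have he13 : (Algebra.TensorProduct.map (AlgHom.id k A)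
        (Algebra.TensorProduct.includeRight (R := k) (A := A) (B := A))) ρ = rho13 k A ρ := by
      rw [expand13]
      nth_rewrite 1 [hρ]
      rw [map_sum]
      simp [Algebra.TensorProduct.map_tmul]
    have h12inv : rho12 k A ρ * (Algebra.TensorProduct.map (AlgHom.id k A)
        (Algebra.TensorProduct.includeLeft (R := k) (A := A) (B := A))) σv = 1 := by
      rw [← he12, ← map_mul, hρσ, map_one]
    have h13inv : rho13 k A ρ * (Algebra.TensorProduct.map (AlgHom.id k A)
        (Algebra.TensorProduct.includeRight (R := k) (A := A) (B := A))) σv = 1 := by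
      rw [← he13, ← map_mul, hρσ, map_one]
    have hΦσρ : (Algebra.TensorProduct.map (AlgHom.id k A) (Bialgebra.comulAlgHom k A)) σv *
        ((Algebra.TensorProduct.map (AlgHom.id k A) (Bialgebra.comulAlgHom k A)) ρ) = 1 := by
      rw [← map_mul, hσρ, map_one]
    have hstep : (Algebra.TensorProduct.map (AlgHom.id k A) (Bialgebra.comulAlgHom k A)) σv *
        rho13 k A ρ = (Algebra.TensorProduct.map (AlgHom.id k A)
          (Algebra.TensorProduct.includeLeft (R := k) (A := A) (B := A))) σv := by
      calc (Algebra.TensorProduct.map (AlgHom.id k A) (Bialgebra.comulAlgHom k A)) σv *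
            rho13 k A ρ
          = ((Algebra.TensorProduct.map (AlgHom.id k A) (Bialgebra.comulAlgHom k A)) σv *
              rho13 k A ρ) * (rho12 k A ρ * (Algebra.TensorProduct.map (AlgHom.id k A)
              (Algebra.TensorProduct.includeLeft (R := k) (A := A) (B := A))) σv) := by
            rw [h12inv, mul_one]
        _ = ((Algebra.TensorProduct.map (AlgHom.id k A) (Bialgebra.comulAlgHom k A)) σv *
              (rho13 k A ρ * rho12 k A ρ)) * (Algebra.TensorProduct.map (AlgHom.id k A)
              (Algebra.TensorProduct.includeLeft (R := k) (A := A) (B := A))) σv := by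
            rw [← mul_assoc, mul_assoc _ (rho13 k A ρ) (rho12 k A ρ)]
        _ = _ := by rw [← hΦρ, hΦσρ, one_mul]
    have hΦσ : (Algebra.TensorProduct.map (AlgHom.id k A) (Bialgebra.comulAlgHom k A)) σv
        = (Algebra.TensorProduct.map (AlgHom.id k A)
            (Algebra.TensorProduct.includeLeft (R := k) (A := A) (B := A))) σv *
          (Algebra.TensorProduct.map (AlgHom.id k A)
            (Algebra.TensorProduct.includeRight (R := k) (A := A) (B := A))) σv := by
      calc (Algebra.TensorProduct.map (AlgHom.id k A) (Bialgebra.comulAlgHom k A)) σv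
          = (Algebra.TensorProduct.map (AlgHom.id k A) (Bialgebra.comulAlgHom k A)) σv *
            (rho13 k A ρ * (Algebra.TensorProduct.map (AlgHom.id k A)
              (Algebra.TensorProduct.includeRight (R := k) (A := A) (B := A))) σv) := by
            rw [h13inv, mul_one]
        _ = _ := by rw [← mul_assoc, hstep]
    -- apply H3
    have hL3 : H3 ((Algebra.TensorProduct.map (AlgHom.id k A) (Bialgebra.comulAlgHom k A)) σv)
        = 1 := by
      rw [hσ, map_sum, map_sum]
      calc ∑ p ∈ Sf, H3 ((Algebra.TensorProduct.map (AlgHom.id k A)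
            (Bialgebra.comulAlgHom k A)) (antipode (R := k) p.1 ⊗ₜ[k] p.2))
          = ∑ p ∈ Sf, (Coalgebra.counit (R := k) p.2 • antipode (R := k) p.1) ⊗ₜ[k] (1 : A) := by
            refine Finset.sum_congr rfl fun p _ => ?_
            rw [Algebra.TensorProduct.map_tmul, AlgHom.coe_id, id_eq,
              Bialgebra.comulAlgHom_apply, H3_tmul_gen, foldS'_comul,
              Algebra.algebraMap_eq_smul_one, TensorProduct.tmul_smul,
              TensorProduct.smul_tmul']
        _ = (∑ p ∈ Sf, Coalgebra.counit (R := k) p.2 • antipode (R := k) p.1) ⊗ₜ[k] (1 : A) := by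
            rw [TensorProduct.sum_tmul]
        _ = 1 := by
            rw [show (∑ p ∈ Sf, Coalgebra.counit (R := k) p.2 • antipode (R := k) p.1)
                = antipode (R := k) (∑ p ∈ Sf, Coalgebra.counit (R := k) p.2 • p.1) by
              rw [map_sum]; exact Finset.sum_congr rfl fun p _ => (map_smul _ _ _).symm]
            rw [hP1, antipode_one', Algebra.TensorProduct.one_def]
    have hR3 : H3 ((Algebra.TensorProduct.map (AlgHom.id k A)
          (Algebra.TensorProduct.includeLeft (R := k) (A := A) (B := A))) σv *
        (Algebra.TensorProduct.map (AlgHom.id k A)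
          (Algebra.TensorProduct.includeRight (R := k) (A := A) (B := A))) σv)
        = σv * TensorProduct.map LinearMap.id (antipode (R := k)) σv := by
      have e1 : (Algebra.TensorProduct.map (AlgHom.id k A)
          (Algebra.TensorProduct.includeLeft (R := k) (A := A) (B := A))) σv
          = ∑ p ∈ Sf, antipode (R := k) p.1 ⊗ₜ[k] (p.2 ⊗ₜ[k] (1 : A)) := by
        rw [hσ, map_sum]
        simp [Algebra.TensorProduct.map_tmul]
      have e2 : (Algebra.TensorProduct.map (AlgHom.id k A)
          (Algebra.TensorProduct.includeRight (R := k) (A := A) (B := A))) σv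
          = ∑ p ∈ Sf, antipode (R := k) p.1 ⊗ₜ[k] ((1 : A) ⊗ₜ[k] p.2) := by
        rw [hσ, map_sum]
        simp [Algebra.TensorProduct.map_tmul]
      have e3 : TensorProduct.map LinearMap.id (antipode (R := k)) σv
          = ∑ p ∈ Sf, antipode (R := k) p.1 ⊗ₜ[k] antipode (R := k) p.2 := by
        rw [hσ, map_sum]
        simp
      rw [e1, e2, e3, hσ, sum_tmul_mul_sum_tmul (k := k) Sf Sf
        (fun p => antipode (R := k) p.1) (fun p => p.2 ⊗ₜ[k] (1:A))
        (fun m => antipode (R := k) m.1) (fun m => (1:A) ⊗ₜ[k] m.2),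
        sum_tmul_mul_sum_tmul (k := k) Sf Sf
        (fun p => antipode (R := k) p.1) Prod.snd
        (fun m => antipode (R := k) m.1) (fun m => antipode (R := k) m.2), map_sum]
      refine Finset.sum_congr rfl fun p _ => ?_
      rw [map_sum]
      refine Finset.sum_congr rfl fun m _ => ?_
      rw [Algebra.TensorProduct.tmul_mul_tmul, mul_one, one_mul, H3_tmul]
    have hσT : σv * TensorProduct.map LinearMap.id (antipode (R := k)) σv = 1 :=
      (hR3.symm.trans (congrArg H3 hΦσ).symm).trans hL3
    have hTρ : TensorProduct.map LinearMap.id (antipode (R := k)) σv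
        = TensorProduct.map (antipode (R := k)) (antipode (R := k)) ρ := by
      rw [hσ, map_sum, hρ, map_sum]
      simp
    calc TensorProduct.map (antipode (R := k)) (antipode (R := k)) ρ
        = (ρ * σv) * TensorProduct.map (antipode (R := k)) (antipode (R := k)) ρ := by
          rw [hρσ, one_mul]
      _ = ρ * (σv * TensorProduct.map LinearMap.id (antipode (R := k)) σv) := by
          rw [mul_assoc, hTρ]
      _ = ρ := by rw [hσT, mul_one]
  -- Drinfeld element
  have hu : uElt k A ρ = ∑ p ∈ Sf, antipode (R := k) p.2 * p.1 := by
    rw [uElt, hρ, map_sum, map_sum, map_sum]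
    simp
  have hR1 : ∀ x : A, uElt k A ρ * x
      = antipode (R := k) (antipode (R := k) x) * uElt k A ρ :=
    fun x => u_mul_eq hρ hcom (uElt k A ρ) hu x
  -- Σ_m S(m.2) * (u * S(m.1)) = 1
  have hPS : (∑ p ∈ Sf, ∑ m ∈ Sf,
      (p.1 * antipode (R := k) m.1) ⊗ₜ[k] (p.2 * m.2)) = 1 := by
    rw [← hρσ, hσ, hρ, sum_tmul_mul_sum_tmul (k := k) Sf Sf Prod.fst Prod.snd
      (fun m => antipode (R := k) m.1) Prod.snd]
  have h6 := congrArg (foldF1 (k := k) (A := A)) hPS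
  rw [map_sum, Algebra.TensorProduct.one_def] at h6
  simp only [map_sum, foldF1_tmul] at h6
  -- h6 : Σ_p Σ_m S(p.2 * m.2) * (p.1 * S m.1) = S 1 * 1
  have hE2 : ∑ m ∈ Sf, antipode (R := k) m.2 *
      (uElt k A ρ * antipode (R := k) m.1) = 1 := by
    rw [← Finset.sum_comm] at h6
    calc ∑ m ∈ Sf, antipode (R := k) m.2 * (uElt k A ρ * antipode (R := k) m.1)
        = ∑ m ∈ Sf, ∑ p ∈ Sf, antipode (R := k) (p.2 * m.2) *
            (p.1 * antipode (R := k) m.1) := by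
          refine Finset.sum_congr rfl fun m _ => ?_
          rw [hu, Finset.sum_mul, Finset.mul_sum]
          refine Finset.sum_congr rfl fun p _ => ?_
          rw [antipode_mul']
          simp only [mul_assoc]
      _ = 1 := by rw [h6, antipode_one', one_mul]
  have hWu : (∑ m ∈ Sf, antipode (R := k) m.2 *
      antipode (R := k) (antipode (R := k) (antipode (R := k) m.1))) * uElt k A ρ = 1 := by
    rw [Finset.sum_mul, ← hE2]
    refine Finset.sum_congr rfl fun m _ => ?_
    rw [hR1 (antipode (R := k) m.1), ← mul_assoc]
  -- the inverse
  have hs2v : antipode (R := k) (antipode (R := k)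
      (∑ p ∈ Sf, p.2 * antipode (R := k) (antipode (R := k) p.1)))
      = ∑ m ∈ Sf, antipode (R := k) m.2 *
          antipode (R := k) (antipode (R := k) (antipode (R := k) m.1)) := by
    rw [map_sum, map_sum]
    calc ∑ p ∈ Sf, antipode (R := k) (antipode (R := k)
          (p.2 * antipode (R := k) (antipode (R := k) p.1)))
        = ∑ p ∈ Sf, antipode (R := k) (antipode (R := k) p.2) *
            antipode (R := k) (antipode (R := k) (antipode (R := k) (antipode (R := k) p.1))) := by
          refine Finset.sum_congr rfl fun p _ => ?_
          rw [antipode_mul', antipode_mul']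
      _ = ∑ m ∈ Sf, antipode (R := k) m.2 *
            antipode (R := k) (antipode (R := k) (antipode (R := k) m.1)) := by
          have hL := congrArg (LinearMap.mul' k A ∘ₗ
            TensorProduct.map (antipode (R := k))
              (antipode (R := k) ∘ₗ antipode (R := k) ∘ₗ antipode (R := k)) ∘ₗ
            (TensorProduct.comm k A A).toLinearMap) hss
          rw [hρ, map_sum, map_sum] at hL
          simp only [map_sum, LinearMap.comp_apply, LinearEquiv.coe_coe,
            TensorProduct.comm_tmul, TensorProduct.map_tmul, LinearMap.mul'_apply] at hL
          exact hL
  have hWv : antipode (R := k) (antipode (R := k)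
      (∑ p ∈ Sf, p.2 * antipode (R := k) (antipode (R := k) p.1))) * uElt k A ρ = 1 := by
    rw [hs2v, hWu]
  have huv : uElt k A ρ * (∑ p ∈ Sf, p.2 * antipode (R := k) (antipode (R := k) p.1)) = 1 := by
    rw [hR1 (∑ p ∈ Sf, p.2 * antipode (R := k) (antipode (R := k) p.1)), hWv]
  have hveq : (∑ p ∈ Sf, p.2 * antipode (R := k) (antipode (R := k) p.1))
      = antipode (R := k) (antipode (R := k)
          (∑ p ∈ Sf, p.2 * antipode (R := k) (antipode (R := k) p.1))) := by
    calc (∑ p ∈ Sf, p.2 * antipode (R := k) (antipode (R := k) p.1))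
        = (antipode (R := k) (antipode (R := k)
            (∑ p ∈ Sf, p.2 * antipode (R := k) (antipode (R := k) p.1))) * uElt k A ρ) *
          (∑ p ∈ Sf, p.2 * antipode (R := k) (antipode (R := k) p.1)) := by
          rw [hWv, one_mul]
      _ = antipode (R := k) (antipode (R := k)
            (∑ p ∈ Sf, p.2 * antipode (R := k) (antipode (R := k) p.1))) *
          (uElt k A ρ * (∑ p ∈ Sf, p.2 * antipode (R := k) (antipode (R := k) p.1))) := by
          rw [mul_assoc]
      _ = _ := by rw [huv, mul_one]
  have hvu : (∑ p ∈ Sf, p.2 * antipode (R := k) (antipode (R := k) p.1)) * uElt k A ρ = 1 := by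
    conv_lhs => rw [hveq]
    exact hWv
  
  refine ⟨∑ p ∈ Sf, p.2 * antipode (R := k) (antipode (R := k) p.1), huv, hvu, fun x => ?_⟩
  calc HopfAlgebra.antipode (R := k) (HopfAlgebra.antipode (R := k) x)
      = antipode (R := k) (antipode (R := k) x) *
        (uElt k A ρ * (∑ p ∈ Sf, p.2 * antipode (R := k) (antipode (R := k) p.1))) := by
        rw [huv, mul_one]
    _ = (antipode (R := k) (antipode (R := k) x) * uElt k A ρ) *
        (∑ p ∈ Sf, p.2 * antipode (R := k) (antipode (R := k) p.1)) := by rw [mul_assoc]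
    _ = uElt k A ρ * x * (∑ p ∈ Sf, p.2 * antipode (R := k) (antipode (R := k) p.1)) := by
        rw [← hR1 x]

end
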